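/- arXiv:1611.09980 — 2 statements merged into one kernel-verified Lean document; each statement's English description precedes it below -/
import Mathlib

section
/- Let g: (0,∞) → [0,∞) be a probability density whose Laplace transform satisfies ∫_0^∞ e^{-λt} g(t) dt = (1+Ψ(λ))^{-(r+1)} for all λ>0, where Ψ(λ) = ∫_0^1 (1-e^{-λx})αx^{-α-1}dx, r∈ℕ, 0<α<1. Then r·α ∫_0^1 x^{-α} (∫_0^∞ g(t)/(x+t) dt) dx = 1. -/
open MeasureTheory Set

open Filter Real Topology

lemma rpow_int' (α : ℝ) (hα1 : α < 1) : IntegrableOn (fun x : ℝ => x ^ (-α)) (Ioo 0 1) :=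
  (intervalIntegral.integrableOn_Ioo_rpow_iff one_pos).2 (by linarith)

lemma aux_bound {α l x : ℝ} (hα : 0 < α) (hl : 0 ≤ l) (hx : x ∈ Ioo (0:ℝ) 1) :
    ‖(1 - Real.exp (-l * x)) * (α * x ^ (-α - 1))‖ ≤ l * (α * x ^ (-α)) := by
  obtain ⟨hx0, hx1⟩ := hx
  have hxp : (0:ℝ) < x ^ (-α - 1) := Real.rpow_pos_of_pos hx0 _
  have h1 : 0 ≤ 1 - Real.exp (-l * x) := by
    have : Real.exp (-l * x) ≤ 1 := Real.exp_le_one_iff.2 (by nlinarith)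
    linarith
  have h2 : 1 - Real.exp (-l * x) ≤ l * x := by
    have := Real.add_one_le_exp (-(l * x))
    have h3 : 1 - (l*x) ≤ Real.exp (-l*x) := by rw [neg_mul]; linarith
    linarith
  rw [Real.norm_eq_abs, abs_of_nonneg (by positivity)]
  calc (1 - Real.exp (-l * x)) * (α * x ^ (-α - 1)) ≤ (l * x) * (α * x ^ (-α - 1)) := by
        apply mul_le_mul_of_nonneg_right h2 (by positivity)
    _ = l * (α * (x ^ (-α - 1) * x)) := by ring
    _ = l * (α * x ^ (-α)) := by
        rw [← Real.rpow_add_one (ne_of_gt hx0)]; norm_num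

lemma psi_hasDeriv (α : ℝ) (hα : 0 < α) (hα1 : α < 1) {l : ℝ} (hl : 0 < l) :
    HasDerivAt (fun l => ∫ x in Ioo (0:ℝ) 1, (1 - Real.exp (-l * x)) * (α * x ^ (-α - 1)))
      (∫ x in Ioo (0:ℝ) 1, α * (x ^ (-α) * Real.exp (-l * x))) l := by
  have hmeas : ∀ y : ℝ, AEStronglyMeasurable
      (fun x : ℝ => (1 - Real.exp (-y * x)) * (α * x ^ (-α - 1)))
      (volume.restrict (Ioo (0:ℝ) 1)) := by
    intro y; apply Measurable.aestronglyMeasurable; fun_prop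
  have hbd := rpow_int' α hα1
  have key := hasDerivAt_integral_of_dominated_loc_of_deriv_le (s := Metric.ball l (l/2))
      (μ := volume.restrict (Ioo (0:ℝ) 1))
      (F := fun (y x : ℝ) => (1 - Real.exp (-y * x)) * (α * x ^ (-α - 1)))
      (F' := fun (y x : ℝ) => (x * Real.exp (-y * x)) * (α * x ^ (-α - 1)))
      (bound := fun x : ℝ => α * x ^ (-α))
      (x₀ := l) (Metric.ball_mem_nhds _ (by positivity))
      (Eventually.of_forall fun y => hmeas y)
      ?_ ?_ ?_ ?_ ?_
  · obtain ⟨-, h⟩ := key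
    have heq : ∫ x in Ioo (0:ℝ) 1, (x * Real.exp (-l * x)) * (α * x ^ (-α - 1))
        = ∫ x in Ioo (0:ℝ) 1, α * (x ^ (-α) * Real.exp (-l * x)) := by
      apply setIntegral_congr_fun measurableSet_Ioo
      intro x hx
      have hx0 := hx.1
      have : x ^ (-α - 1) * x = x ^ (-α) := by
        rw [← Real.rpow_add_one (ne_of_gt hx0)]; norm_num
      calc (x * Real.exp (-l * x)) * (α * x ^ (-α - 1))
          = α * ((x ^ (-α - 1) * x) * Real.exp (-l * x)) := by ring
        _ = α * (x ^ (-α) * Real.exp (-l * x)) := by rw [this]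
    rwa [heq] at h
  · -- integrability of F l
    apply Integrable.mono (hbd.const_mul (l * α))
    · exact hmeas l
    · filter_upwards [ae_restrict_mem measurableSet_Ioo] with x hx
      have := aux_bound hα hl.le hx
      calc ‖(1 - Real.exp (-l * x)) * (α * x ^ (-α - 1))‖ ≤ l * (α * x ^ (-α)) := this
        _ ≤ ‖l * α * x ^ (-α)‖ := by
            rw [Real.norm_eq_abs]
            have : (0:ℝ) < x ^ (-α) := Real.rpow_pos_of_pos hx.1 _
            rw [abs_of_nonneg (by positivity)]; nlinarith [this]
  · -- F' measurable
    apply Measurable.aestronglyMeasurable; fun_prop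
  · -- bound for F'
    filter_upwards [ae_restrict_mem measurableSet_Ioo] with x hx y hy
    obtain ⟨hx0, hx1⟩ := hx
    have hy0 : 0 < y := by
      rw [Metric.mem_ball, Real.dist_eq, abs_lt] at hy
      linarith
    have hxp : (0:ℝ) < x ^ (-α - 1) := Real.rpow_pos_of_pos hx0 _
    have hexp : Real.exp (-y * x) ≤ 1 := Real.exp_le_one_iff.2 (by nlinarith)
    rw [Real.norm_eq_abs, abs_of_nonneg (by positivity)]
    calc (x * Real.exp (-y * x)) * (α * x ^ (-α - 1))
        ≤ (x * 1) * (α * x ^ (-α - 1)) := by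
          apply mul_le_mul_of_nonneg_right _ (by positivity)
          exact mul_le_mul_of_nonneg_left hexp hx0.le
      _ = α * (x ^ (-α - 1) * x) := by ring
      _ = α * x ^ (-α) := by rw [← Real.rpow_add_one (ne_of_gt hx0)]; norm_num
  · -- bound integrable
    exact hbd.const_mul α
  · -- differentiability
    filter_upwards [] with x y _
    have h1 : HasDerivAt (fun y : ℝ => -y * x) (-x) y := by
      simpa using ((hasDerivAt_id y).neg.mul_const x)
    have h2 : HasDerivAt (fun y : ℝ => Real.exp (-y * x)) (Real.exp (-y * x) * (-x)) y := h1.exp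
    have h3 : HasDerivAt (fun y : ℝ => 1 - Real.exp (-y * x)) (x * Real.exp (-y * x)) y := by
      have := (hasDerivAt_const y (1:ℝ)).sub h2
      exact this.congr_deriv (by ring)
    have := h3.mul_const (α * x ^ (-α - 1))
    convert this using 1

set_option maxHeartbeats 1000000 in
open Filter Topology ENNReal in
/-- If g is a probability density on (0,∞) with Laplace transform (1+Ψ(λ))^{-(r+1)}, then
rα ∫_0^1 x^{-α} (∫_0^∞ g(t)/(x+t) dt) dx = 1. -/
theorem stmt_10 (α : ℝ) (hα : 0 < α) (hα1 : α < 1) (r : ℕ) (hr : 0 < r)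
    (g : ℝ → ℝ) (hgpos : ∀ t ∈ Ioi (0:ℝ), 0 ≤ g t) (hgmeas : Measurable g)
    (hgprob : ∫ t in Ioi (0:ℝ), g t = 1)
    (hLap : ∀ l > (0:ℝ),
      ∫ t in Ioi (0:ℝ), Real.exp (-l * t) * g t
        = (1 + ∫ x in Ioo (0:ℝ) 1, (1 - Real.exp (-l * x)) * (α * x ^ (-α - 1)))
            ^ (-(r + 1 : ℝ))) :
    r * α * ∫ x in Ioo (0:ℝ) 1, x ^ (-α) * ∫ t in Ioi (0:ℝ), g t / (x + t) = 1 := by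
  have hbd := rpow_int' α hα1
  set Ψ : ℝ → ℝ := fun l => ∫ x in Ioo (0:ℝ) 1, (1 - Real.exp (-l * x)) * (α * x ^ (-α - 1))
    with hΨdef
  set D : ℝ → ℝ := fun l => ∫ x in Ioo (0:ℝ) 1, x ^ (-α) * Real.exp (-l * x) with hDdef
  set L : ℝ → ℝ := fun l => ∫ t in Ioi (0:ℝ), Real.exp (-l * t) * g t with hLdef
  have hg_int : IntegrableOn g (Ioi (0:ℝ)) := by
    by_contra h
    rw [MeasureTheory.integral_undef h] at hgprob
    exact one_ne_zero hgprob.symm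
  have hgnn : 0 ≤ᵐ[volume.restrict (Ioi (0:ℝ))] g := by
    filter_upwards [ae_restrict_mem measurableSet_Ioi] with t ht using hgpos t ht
  have hΨnn : ∀ l : ℝ, 0 ≤ l → 0 ≤ Ψ l := by
    intro l hl
    apply setIntegral_nonneg measurableSet_Ioo
    intro x hx
    have h1 : Real.exp (-l * x) ≤ 1 := Real.exp_le_one_iff.2 (by nlinarith [hx.1])
    have h2 : (0:ℝ) < x ^ (-α - 1) := Real.rpow_pos_of_pos hx.1 _
    exact mul_nonneg (by linarith) (by positivity)
  have hΨ0 : Ψ 0 = 0 := by simp [hΨdef]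
  have hDnn : ∀ l : ℝ, 0 ≤ D l := by
    intro l
    apply setIntegral_nonneg measurableSet_Ioo
    intro x hx
    have := Real.rpow_pos_of_pos hx.1 (-α)
    positivity
  have hLnn : ∀ l : ℝ, 0 ≤ L l := by
    intro l
    apply setIntegral_nonneg measurableSet_Ioi
    intro t ht
    exact mul_nonneg (Real.exp_nonneg _) (hgpos t ht)
  have hD_int : ∀ l : ℝ, 0 ≤ l → IntegrableOn (fun x => x ^ (-α) * Real.exp (-l * x)) (Ioo (0:ℝ) 1) := by
    intro l hl
    apply Integrable.mono hbd (by apply Measurable.aestronglyMeasurable; fun_prop)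
    filter_upwards [ae_restrict_mem measurableSet_Ioo] with x hx
    have h1 : (0:ℝ) < x ^ (-α) := Real.rpow_pos_of_pos hx.1 _
    have h2 : Real.exp (-l * x) ≤ 1 := Real.exp_le_one_iff.2 (by nlinarith [hx.1])
    rw [Real.norm_eq_abs, Real.norm_eq_abs, abs_of_nonneg (by positivity),
      abs_of_nonneg h1.le]
    nlinarith
  have hL_int : ∀ l : ℝ, 0 ≤ l → IntegrableOn (fun t => Real.exp (-l * t) * g t) (Ioi (0:ℝ)) := by
    intro l hl
    apply Integrable.mono hg_int (by apply Measurable.aestronglyMeasurable; fun_prop)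
    filter_upwards [ae_restrict_mem measurableSet_Ioi] with t ht
    have h2 : Real.exp (-l * t) ≤ 1 := Real.exp_le_one_iff.2 (by nlinarith [ht.out])
    rw [Real.norm_eq_abs, Real.norm_eq_abs, abs_mul, abs_of_nonneg (Real.exp_nonneg _)]
    nlinarith [abs_nonneg (g t), Real.exp_nonneg (-l * t)]
  have hΨpos1 : ∀ l : ℝ, 0 < l → (0:ℝ) < 1 + Ψ l := fun l hl => by linarith [hΨnn l hl.le]
  have hL_eq : ∀ l : ℝ, 0 < l → L l = (1 + Ψ l) ^ (-((r:ℝ) + 1)) := by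
    intro l hl
    exact hLap l hl
  -- derivative of the function G l = (1 + Ψ l) ^ (-r)
  have hG_deriv : ∀ l : ℝ, 0 < l →
      HasDerivAt (fun l => (1 + Ψ l) ^ (-(r:ℝ))) (-(r:ℝ) * α * (L l * D l)) l := by
    intro l hl
    have hΨ' : HasDerivAt Ψ (α * D l) l := by
      have h := psi_hasDeriv α hα hα1 hl
      have : ∫ x in Ioo (0:ℝ) 1, α * (x ^ (-α) * Real.exp (-l * x)) = α * D l := by
        rw [hDdef]; exact integral_const_mul α _
      rwa [this] at h
    have hinner : HasDerivAt (fun l => 1 + Ψ l) (α * D l) l := by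
      exact ((hasDerivAt_const l (1:ℝ)).add hΨ').congr_deriv (by ring)
    have h1pos := hΨpos1 l hl
    have houter : HasDerivAt (fun y : ℝ => y ^ (-(r:ℝ)))
        ((-(r:ℝ)) * (1 + Ψ l) ^ (-(r:ℝ) - 1)) (1 + Ψ l) :=
      Real.hasDerivAt_rpow_const (Or.inl (ne_of_gt h1pos))
    have hcomp := HasDerivAt.comp l houter hinner
    have hexp : (1 + Ψ l) ^ (-(r:ℝ) - 1) = L l := by
      rw [hL_eq l hl, show -(r:ℝ) - 1 = -((r:ℝ) + 1) by ring]
    have : (fun y : ℝ => y ^ (-(r:ℝ))) ∘ (fun l => 1 + Ψ l) = fun l => (1 + Ψ l) ^ (-(r:ℝ)) := rfl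
    rw [this] at hcomp
    rw [hexp] at hcomp
    exact hcomp.congr_deriv (by ring)
  -- L tends to 0 at infinity
  have hL_tendsto : Tendsto L atTop (𝓝 0) := by
    have key : Tendsto (fun l => ∫ t in Ioi (0:ℝ), Real.exp (-l * t) * g t) atTop
        (𝓝 (∫ t in Ioi (0:ℝ), (0:ℝ))) := by
      apply tendsto_integral_filter_of_dominated_convergence (fun t => |g t|)
      · exact Eventually.of_forall fun l => by apply Measurable.aestronglyMeasurable; fun_prop
      · filter_upwards [eventually_ge_atTop (0:ℝ)] with l hl
        filter_upwards [ae_restrict_mem measurableSet_Ioi] with t ht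
        have h2 : Real.exp (-l * t) ≤ 1 := Real.exp_le_one_iff.2 (by nlinarith [ht.out])
        rw [Real.norm_eq_abs, abs_mul, abs_of_nonneg (Real.exp_nonneg _)]
        nlinarith [abs_nonneg (g t), Real.exp_nonneg (-l * t)]
      · exact hg_int.abs
      · filter_upwards [ae_restrict_mem measurableSet_Ioi] with t ht
        have h1 : Tendsto (fun l : ℝ => l * t) atTop atTop := tendsto_id.atTop_mul_const ht.out
        have h2 : Tendsto (fun l : ℝ => -l * t) atTop atBot := by
          simpa [neg_mul] using tendsto_neg_atBot_iff.2 h1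
        simpa using ((Real.tendsto_exp_atBot).comp h2).mul_const (g t)
    simpa [hLdef] using key
  -- G tends to 0 at infinity
  have hG_tendsto : Tendsto (fun l => (1 + Ψ l) ^ (-(r:ℝ))) atTop (𝓝 0) := by
    have hc : (0:ℝ) < (r:ℝ) / ((r:ℝ) + 1) := by positivity
    have hEq : ∀ᶠ l in atTop, (L l) ^ ((r:ℝ) / ((r:ℝ) + 1)) = (1 + Ψ l) ^ (-(r:ℝ)) := by
      filter_upwards [eventually_gt_atTop (0:ℝ)] with l hl
      rw [hL_eq l hl, ← Real.rpow_mul (hΨpos1 l hl).le,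
        show (-((r:ℝ)+1)) * ((r:ℝ) / ((r:ℝ) + 1)) = -(r:ℝ) by field_simp]
    have h1 : Tendsto (fun l => (L l) ^ ((r:ℝ) / ((r:ℝ) + 1))) atTop (𝓝 0) := by
      have hca := Real.continuousAt_rpow_const 0 ((r:ℝ) / ((r:ℝ) + 1)) (Or.inr hc.le)
      have := hca.tendsto.comp hL_tendsto
      simpa [Real.zero_rpow (ne_of_gt hc), Function.comp_def] using this
    exact h1.congr' hEq
  -- continuity of Ψ at 0 from the right
  have hΨcont : ContinuousWithinAt Ψ (Ici (0:ℝ)) 0 := by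
    have hC : Tendsto (fun l : ℝ => l * (α * ∫ x in Ioo (0:ℝ) 1, x ^ (-α)))
        (𝓝[Ici (0:ℝ)] 0) (𝓝 0) := by
      have := (continuous_id.mul (continuous_const
        (y := α * ∫ x in Ioo (0:ℝ) 1, x ^ (-α)))).tendsto (0:ℝ)
      simpa [Pi.mul_def] using this.mono_left nhdsWithin_le_nhds
    have hub : ∀ l : ℝ, 0 ≤ l → Ψ l ≤ l * (α * ∫ x in Ioo (0:ℝ) 1, x ^ (-α)) := by
      intro l hl
      have hb : ‖Ψ l‖ ≤ ∫ x in Ioo (0:ℝ) 1, (l * α) * x ^ (-α) := by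
        apply norm_integral_le_of_norm_le (hbd.const_mul (l * α))
        filter_upwards [ae_restrict_mem measurableSet_Ioo] with x hx
        calc ‖(1 - Real.exp (-l * x)) * (α * x ^ (-α - 1))‖
            ≤ l * (α * x ^ (-α)) := aux_bound hα hl hx
          _ = (l * α) * x ^ (-α) := by ring
      calc Ψ l ≤ ‖Ψ l‖ := le_abs_self _
        _ ≤ ∫ x in Ioo (0:ℝ) 1, (l * α) * x ^ (-α) := hb
        _ = l * (α * ∫ x in Ioo (0:ℝ) 1, x ^ (-α)) := by rw [integral_const_mul]; ring
    have h0 : Tendsto Ψ (𝓝[Ici (0:ℝ)] 0) (𝓝 0) := by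
      apply squeeze_zero' ?_ ?_ hC
      · filter_upwards [self_mem_nhdsWithin] with l hl using hΨnn l hl
      · filter_upwards [self_mem_nhdsWithin] with l hl using hub l hl
    rw [ContinuousWithinAt, hΨ0]
    exact h0
  -- FTC on (0, ∞)
  have hrα : (0:ℝ) < (r:ℝ) * α := by positivity
  set f : ℝ → ℝ := fun l => -(1 + Ψ l) ^ (-(r:ℝ)) / ((r:ℝ) * α) with hfdef
  have hfderiv : ∀ l ∈ Ioi (0:ℝ), HasDerivAt f (L l * D l) l := by
    intro l hl
    have := ((hG_deriv l hl).neg).div_const ((r:ℝ) * α)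
    exact this.congr_deriv (by rw [div_eq_iff hrα.ne']; ring)
  have hfcont : ContinuousWithinAt f (Ici (0:ℝ)) 0 := by
    apply ContinuousWithinAt.div_const
    apply ContinuousWithinAt.neg
    have hin : ContinuousWithinAt (fun l => 1 + Ψ l) (Ici (0:ℝ)) 0 :=
      continuousWithinAt_const.add hΨcont
    apply hin.rpow_const
    left
    show (1:ℝ) + Ψ 0 ≠ 0
    rw [hΨ0]; norm_num
  have hftends : Tendsto f atTop (𝓝 0) := by
    have := (hG_tendsto.neg).div_const ((r:ℝ) * α)
    rw [neg_zero, zero_div] at this; exact this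
  have hpos' : ∀ l ∈ Ioi (0:ℝ), 0 ≤ L l * D l := fun l _ => mul_nonneg (hLnn l) (hDnn l)
  have hIntD : IntegrableOn (fun l => L l * D l) (Ioi (0:ℝ)) :=
    integrableOn_Ioi_deriv_of_nonneg hfcont hfderiv hpos' hftends
  have hIval : ∫ l in Ioi (0:ℝ), L l * D l = 1 / ((r:ℝ) * α) := by
    rw [integral_Ioi_of_hasDerivAt_of_nonneg hfcont hfderiv hpos' hftends]
    rw [hfdef]
    simp only [hΨ0]
    rw [show (1:ℝ) + 0 = 1 by norm_num, Real.one_rpow]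
    ring
  -- Tonelli computations
  have hexpint : ∀ s : ℝ, 0 < s →
      ∫⁻ l in Ioi (0:ℝ), ENNReal.ofReal (Real.exp (-l * s)) = ENNReal.ofReal (1/s) := by
    intro s hs
    have hcongr : ∀ l : ℝ, ENNReal.ofReal (Real.exp (-l * s)) = ENNReal.ofReal (Real.exp (-s * l)) := by
      intro l; rw [show -l * s = -s * l by ring]
    simp only [hcongr]
    rw [← ofReal_integral_eq_lintegral_ofReal (exp_neg_integrableOn_Ioi 0 hs)
      (Eventually.of_forall fun l => Real.exp_nonneg _)]
    congr 1
    have := integral_comp_mul_left_Ioi (fun u => Real.exp (-u)) 0 hs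
    simp only [mul_zero, neg_mul] at this ⊢
    rw [this, integral_exp_neg_Ioi]
    simp [smul_eq_mul, one_div]
  have hfrac_int : ∀ x : ℝ, 0 < x → IntegrableOn (fun t => g t / (x + t)) (Ioi (0:ℝ)) := by
    intro x hx
    apply Integrable.mono (hg_int.const_mul x⁻¹)
      (by apply Measurable.aestronglyMeasurable; fun_prop)
    filter_upwards [ae_restrict_mem measurableSet_Ioi] with t ht
    have hxt : (0:ℝ) < x + t := by linarith [ht.out]
    rw [Real.norm_eq_abs, Real.norm_eq_abs, abs_div, abs_of_nonneg hxt.le, abs_mul,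
      abs_of_nonneg (inv_nonneg.2 hx.le), ← div_eq_inv_mul]
    exact div_le_div_of_nonneg_left (abs_nonneg _) hx (by linarith [ht.out])
  -- step 1: rewrite ofReal (L l * D l) as a double lintegral
  have hJ1 : ∀ l ∈ Ioi (0:ℝ), ENNReal.ofReal (L l * D l)
      = ∫⁻ x in Ioo (0:ℝ) 1, ∫⁻ t in Ioi (0:ℝ),
          ENNReal.ofReal (x ^ (-α) * Real.exp (-l * (x + t)) * g t) := by
    intro l hl
    have hLof : ENNReal.ofReal (L l)
        = ∫⁻ t in Ioi (0:ℝ), ENNReal.ofReal (Real.exp (-l * t) * g t) := by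
      apply ofReal_integral_eq_lintegral_ofReal (hL_int l hl.out.le)
      filter_upwards [ae_restrict_mem measurableSet_Ioi] with t ht
      exact mul_nonneg (Real.exp_nonneg _) (hgpos t ht)
    have hDof : ENNReal.ofReal (D l)
        = ∫⁻ x in Ioo (0:ℝ) 1, ENNReal.ofReal (x ^ (-α) * Real.exp (-l * x)) := by
      apply ofReal_integral_eq_lintegral_ofReal (hD_int l hl.out.le)
      filter_upwards [ae_restrict_mem measurableSet_Ioo] with x hx
      exact mul_nonneg (Real.rpow_pos_of_pos hx.1 _).le (Real.exp_nonneg _)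
    rw [mul_comm (L l) (D l), ENNReal.ofReal_mul (hDnn l), hDof,
      ← lintegral_mul_const' _ _ ENNReal.ofReal_ne_top]
    apply setLIntegral_congr_fun_ae measurableSet_Ioo
    filter_upwards [] with x hx
    rw [hLof, ← lintegral_const_mul' _ _ ENNReal.ofReal_ne_top]
    apply setLIntegral_congr_fun_ae measurableSet_Ioi
    filter_upwards [] with t ht
    rw [← ENNReal.ofReal_mul (mul_nonneg (Real.rpow_pos_of_pos hx.1 _).le (Real.exp_nonneg _))]
    congr 1
    have hexp2 : Real.exp (-l * (x + t)) = Real.exp (-l * x) * Real.exp (-l * t) := by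
      rw [← Real.exp_add]; congr 1; ring
    rw [hexp2]; ring
  -- step 2: swap integration orders
  have hmeasE : Measurable (fun p : (ℝ × ℝ) × ℝ =>
      ENNReal.ofReal (p.1.2 ^ (-α) * Real.exp (-p.1.1 * (p.1.2 + p.2)) * g p.2)) := by
    fun_prop
  have hswap1 : ∫⁻ l in Ioi (0:ℝ), ∫⁻ x in Ioo (0:ℝ) 1, (∫⁻ t in Ioi (0:ℝ),
        ENNReal.ofReal (x ^ (-α) * Real.exp (-l * (x + t)) * g t))
      = ∫⁻ x in Ioo (0:ℝ) 1, ∫⁻ l in Ioi (0:ℝ), ∫⁻ t in Ioi (0:ℝ),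
        ENNReal.ofReal (x ^ (-α) * Real.exp (-l * (x + t)) * g t) := by
    apply lintegral_lintegral_swap
    exact (hmeasE.lintegral_prod_right').aemeasurable
  have hswap2 : ∀ x : ℝ, ∫⁻ l in Ioi (0:ℝ), ∫⁻ t in Ioi (0:ℝ),
        ENNReal.ofReal (x ^ (-α) * Real.exp (-l * (x + t)) * g t)
      = ∫⁻ t in Ioi (0:ℝ), ∫⁻ l in Ioi (0:ℝ),
        ENNReal.ofReal (x ^ (-α) * Real.exp (-l * (x + t)) * g t) := by
    intro x
    apply lintegral_lintegral_swap
    apply Measurable.aemeasurable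
    fun_prop
  -- step 3: evaluate the inner double integral
  have hJ3 : ∀ x ∈ Ioo (0:ℝ) 1, (∫⁻ t in Ioi (0:ℝ), ∫⁻ l in Ioi (0:ℝ),
        ENNReal.ofReal (x ^ (-α) * Real.exp (-l * (x + t)) * g t))
      = ENNReal.ofReal (x ^ (-α) * ∫ t in Ioi (0:ℝ), g t / (x + t)) := by
    intro x hx
    have hxα : (0:ℝ) ≤ x ^ (-α) := (Real.rpow_pos_of_pos hx.1 _).le
    have step1 : ∀ᵐ t ∂(volume : Measure ℝ), t ∈ Ioi (0:ℝ) →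
        (∫⁻ l in Ioi (0:ℝ), ENNReal.ofReal (x ^ (-α) * Real.exp (-l * (x + t)) * g t))
        = ENNReal.ofReal (x ^ (-α) * (g t / (x + t))) := by
      filter_upwards [] with t ht
      have hs : 0 < x + t := by linarith [hx.1, ht.out]
      have hc : ∀ l : ℝ, ENNReal.ofReal (x ^ (-α) * Real.exp (-l * (x + t)) * g t)
          = ENNReal.ofReal (x ^ (-α) * g t) * ENNReal.ofReal (Real.exp (-l * (x + t))) := by
        intro l
        rw [← ENNReal.ofReal_mul (mul_nonneg hxα (hgpos t ht))]
        congr 1; ring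
      simp only [hc]
      rw [lintegral_const_mul' _ _ ENNReal.ofReal_ne_top, hexpint (x + t) hs,
        ← ENNReal.ofReal_mul (mul_nonneg hxα (hgpos t ht))]
      congr 1
      field_simp
    rw [setLIntegral_congr_fun_ae measurableSet_Ioi step1]
    have step2 : ∀ᵐ t ∂(volume : Measure ℝ), t ∈ Ioi (0:ℝ) →
        ENNReal.ofReal (x ^ (-α) * (g t / (x + t)))
        = ENNReal.ofReal (x ^ (-α)) * ENNReal.ofReal (g t / (x + t)) := by
      filter_upwards [] with t ht
      exact ENNReal.ofReal_mul hxα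
    rw [setLIntegral_congr_fun_ae measurableSet_Ioi step2,
      lintegral_const_mul' _ _ ENNReal.ofReal_ne_top,
      ← ofReal_integral_eq_lintegral_ofReal (hfrac_int x hx.1) ?_,
      ← ENNReal.ofReal_mul hxα]
    filter_upwards [ae_restrict_mem measurableSet_Ioi] with t ht
    exact div_nonneg (hgpos t ht) (by linarith [hx.1, ht.out])
  -- assemble
  have hJval : ∫⁻ l in Ioi (0:ℝ), ENNReal.ofReal (L l * D l)
      = ENNReal.ofReal (1 / ((r:ℝ) * α)) := by
    rw [← ofReal_integral_eq_lintegral_ofReal hIntD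
      (Eventually.of_forall fun l => mul_nonneg (hLnn l) (hDnn l)), hIval]
  have chain : ∫⁻ x in Ioo (0:ℝ) 1,
      ENNReal.ofReal (x ^ (-α) * ∫ t in Ioi (0:ℝ), g t / (x + t))
      = ENNReal.ofReal (1 / ((r:ℝ) * α)) := by
    rw [← hJval]
    rw [setLIntegral_congr_fun_ae measurableSet_Ioi (Eventually.of_forall hJ1), hswap1]
    apply setLIntegral_congr_fun_ae measurableSet_Ioo
    filter_upwards [] with x hx
    rw [← hJ3 x hx, ← hswap2 x]
  -- measurability and nonnegativity of the integrand
  have hhmeas : AEStronglyMeasurable (fun x : ℝ => x ^ (-α) * ∫ t in Ioi (0:ℝ), g t / (x + t))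
      (volume.restrict (Ioo (0:ℝ) 1)) := by
    have h1 : StronglyMeasurable (fun p : ℝ × ℝ => g p.2 / (p.1 + p.2)) :=
      (by fun_prop : Measurable (fun p : ℝ × ℝ => g p.2 / (p.1 + p.2))).stronglyMeasurable
    have h2 : StronglyMeasurable (fun x : ℝ => ∫ t in Ioi (0:ℝ), g t / (x + t)) :=
      h1.integral_prod_right' (ν := volume.restrict (Ioi (0:ℝ)))
    exact (((by fun_prop : Measurable (fun x : ℝ => x ^ (-α))).stronglyMeasurable.mul
      h2)).aestronglyMeasurable
  have hhnn : 0 ≤ᵐ[volume.restrict (Ioo (0:ℝ) 1)]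
      fun x => x ^ (-α) * ∫ t in Ioi (0:ℝ), g t / (x + t) := by
    filter_upwards [ae_restrict_mem measurableSet_Ioo] with x hx
    have h1 := (Real.rpow_pos_of_pos hx.1 (-α)).le
    have h2 : 0 ≤ ∫ t in Ioi (0:ℝ), g t / (x + t) := by
      apply integral_nonneg_of_ae
      filter_upwards [ae_restrict_mem measurableSet_Ioi] with t ht
      exact div_nonneg (hgpos t ht) (by linarith [hx.1, ht.out])
    exact mul_nonneg h1 h2
  have hfinal : ∫ x in Ioo (0:ℝ) 1, x ^ (-α) * ∫ t in Ioi (0:ℝ), g t / (x + t)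
      = 1 / ((r:ℝ) * α) := by
    rw [integral_eq_lintegral_of_nonneg_ae hhnn hhmeas, chain,
      ENNReal.toReal_ofReal (by positivity)]
  rw [hfinal]
  field_simp
end

section
/- Let g be a probability density on (0,∞) whose Laplace transform is (1+Ψ(λ))^{-(r+1)}, with Ψ(λ)=∫_0^1(1-e^{-λx})αx^{-α-1}dx, r∈ℕ, 0<α<1. Then r α ∫_0^1 v^{-α} ∫_0^{1/v} t^{-α} g(t(1-v)) dt dv = 1. -/
open MeasureTheory Set

namespace Stmt15

open Real Filter
open scoped ENNReal

noncomputable def psi (α l : ℝ) : ℝ :=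
  ∫ x in Ioo (0:ℝ) 1, (1 - Real.exp (-l * x)) * (α * x ^ (-α - 1))

noncomputable def hh (α l : ℝ) : ℝ :=
  ∫ x in Ioo (0:ℝ) 1, x ^ (-α) * Real.exp (-l * x)

lemma int_rpow {α : ℝ} (hα1 : α < 1) :
    IntegrableOn (fun x : ℝ => x ^ (-α)) (Ioo (0:ℝ) 1) :=
  (intervalIntegral.integrableOn_Ioo_rpow_iff zero_lt_one).2 (by linarith)

lemma int_hh {α : ℝ} (hα1 : α < 1) (l : ℝ) :
    IntegrableOn (fun x : ℝ => x ^ (-α) * Real.exp (-l * x)) (Ioo (0:ℝ) 1) := by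
  refine Integrable.mono' ((int_rpow hα1).mul_const (Real.exp |l|)) ?_ ?_
  · exact (Measurable.aestronglyMeasurable (by fun_prop))
  · refine (ae_restrict_iff' measurableSet_Ioo).2 (Eventually.of_forall fun x hx => ?_)
    have hx0 : (0:ℝ) < x := hx.1
    have h1 : (0:ℝ) ≤ x ^ (-α) := Real.rpow_nonneg hx0.le _
    have h2 : Real.exp (-l * x) ≤ Real.exp |l| := by
      apply Real.exp_le_exp.2
      calc -l * x ≤ |(-l) * x| := le_abs_self _
        _ = |l| * |x| := by rw [abs_mul, abs_neg]
        _ ≤ |l| * 1 := by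
            apply mul_le_mul_of_nonneg_left _ (abs_nonneg l)
            rw [abs_of_pos hx0]; exact hx.2.le
        _ = |l| := mul_one _
    rw [Real.norm_eq_abs, abs_of_nonneg (mul_nonneg h1 (Real.exp_pos _).le)]
    exact mul_le_mul_of_nonneg_left h2 h1

lemma hh_nonneg {α : ℝ} (l : ℝ) : 0 ≤ hh α l := by
  apply setIntegral_nonneg measurableSet_Ioo
  intro x hx
  exact mul_nonneg (Real.rpow_nonneg hx.1.le _) (Real.exp_pos _).le

lemma rpow_succ_self {α : ℝ} {x : ℝ} (hx : 0 < x) : x ^ (-α - 1) * x = x ^ (-α) := by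
  rw [← Real.rpow_add_one (ne_of_gt hx)]
  norm_num

lemma int_psi {α : ℝ} (hα : 0 < α) (hα1 : α < 1) {l : ℝ} (hl : 0 ≤ l) :
    IntegrableOn (fun x : ℝ => (1 - Real.exp (-l * x)) * (α * x ^ (-α - 1)))
      (Ioo (0:ℝ) 1) := by
  refine Integrable.mono' (((int_rpow hα1).const_mul (l * α))) ?_ ?_
  · exact (Measurable.aestronglyMeasurable (by fun_prop))
  · refine (ae_restrict_iff' measurableSet_Ioo).2 (Eventually.of_forall fun x hx => ?_)
    have hx0 : (0:ℝ) < x := hx.1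
    have hxp : (0:ℝ) ≤ x ^ (-α - 1) := Real.rpow_nonneg hx0.le _
    have he1 : Real.exp (-l * x) ≤ 1 := by
      rw [← Real.exp_zero]
      apply Real.exp_le_exp.2
      nlinarith
    have he2 : 1 - Real.exp (-l * x) ≤ l * x := by
      have := Real.add_one_le_exp (-l * x)
      nlinarith
    have hnn : 0 ≤ (1 - Real.exp (-l * x)) * (α * x ^ (-α - 1)) := by
      apply mul_nonneg (by linarith) (mul_nonneg hα.le hxp)
    rw [Real.norm_eq_abs, abs_of_nonneg hnn]
    calc (1 - Real.exp (-l * x)) * (α * x ^ (-α - 1))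
        ≤ (l * x) * (α * x ^ (-α - 1)) := by
          apply mul_le_mul_of_nonneg_right he2 (mul_nonneg hα.le hxp)
      _ = l * α * (x ^ (-α - 1) * x) := by ring
      _ = l * α * x ^ (-α) := by rw [rpow_succ_self hx0]

lemma psi_nonneg {α : ℝ} (hα : 0 < α) {l : ℝ} (hl : 0 ≤ l) : 0 ≤ psi α l := by
  apply setIntegral_nonneg measurableSet_Ioo
  intro x hx
  have he1 : Real.exp (-l * x) ≤ 1 := by
    rw [← Real.exp_zero]; apply Real.exp_le_exp.2; nlinarith [hx.1]
  exact mul_nonneg (by linarith) (mul_nonneg hα.le (Real.rpow_nonneg hx.1.le _))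

lemma psi_zero {α : ℝ} : psi α 0 = 0 := by
  simp [psi]

lemma psi_cont0 {α : ℝ} (hα : 0 < α) (hα1 : α < 1) :
    ContinuousWithinAt (psi α) (Ici 0) 0 := by
  set C : ℝ := ∫ x in Ioo (0:ℝ) 1, α * x ^ (-α) with hC
  have hle : ∀ l : ℝ, 0 ≤ l → psi α l ≤ l * C := by
    intro l hl
    have h1 : psi α l ≤ ∫ x in Ioo (0:ℝ) 1, l * (α * x ^ (-α)) := by
      apply setIntegral_mono_on (int_psi hα hα1 hl)
        (((int_rpow hα1).const_mul α).const_mul l) measurableSet_Ioo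
      intro x hx
      have hx0 : (0:ℝ) < x := hx.1
      have he2 : 1 - Real.exp (-l * x) ≤ l * x := by
        have := Real.add_one_le_exp (-l * x); nlinarith
      calc (1 - Real.exp (-l * x)) * (α * x ^ (-α - 1))
          ≤ (l * x) * (α * x ^ (-α - 1)) := by
            apply mul_le_mul_of_nonneg_right he2
              (mul_nonneg hα.le (Real.rpow_nonneg hx0.le _))
        _ = l * (α * (x ^ (-α - 1) * x)) := by ring
        _ = l * (α * x ^ (-α)) := by rw [rpow_succ_self hx0]
    rwa [MeasureTheory.integral_const_mul] at h1
  rw [ContinuousWithinAt, psi_zero]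
  have hupper : Tendsto (fun l : ℝ => l * C) (nhdsWithin 0 (Ici 0)) (nhds 0) := by
    have : Tendsto (fun l : ℝ => l * C) (nhds 0) (nhds (0 * C)) :=
      (continuous_id.mul continuous_const).tendsto 0
    rw [zero_mul] at this
    exact this.mono_left nhdsWithin_le_nhds
  refine tendsto_of_tendsto_of_tendsto_of_le_of_le'
    (tendsto_const_nhds : Tendsto (fun _ : ℝ => (0:ℝ)) (nhdsWithin 0 (Ici 0)) (nhds 0))
    hupper ?_ ?_
  · filter_upwards [self_mem_nhdsWithin] with l hl
    exact psi_nonneg hα hl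
  · filter_upwards [self_mem_nhdsWithin] with l hl
    exact hle l hl

lemma psi_hasDeriv {α : ℝ} (hα : 0 < α) (hα1 : α < 1) {l : ℝ} (hl : 0 < l) :
    HasDerivAt (psi α) (α * hh α l) l := by
  have key := hasDerivAt_integral_of_dominated_loc_of_deriv_le
    (μ := volume.restrict (Ioo (0:ℝ) 1))
    (F := fun lam x => (1 - Real.exp (-lam * x)) * (α * x ^ (-α - 1)))
    (F' := fun lam x => (Real.exp (-lam * x) * x) * (α * x ^ (-α - 1)))
    (x₀ := l) (bound := fun x => α * x ^ (-α))
    (Metric.ball_mem_nhds l (half_pos hl))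
    (Eventually.of_forall fun lam => Measurable.aestronglyMeasurable (by fun_prop))
    (int_psi hα hα1 hl.le)
    (Measurable.aestronglyMeasurable (by fun_prop))
    ?_ ((int_rpow hα1).const_mul α) ?_
  · obtain ⟨-, hd⟩ := key
    have heq : (∫ x in Ioo (0:ℝ) 1, (Real.exp (-l * x) * x) * (α * x ^ (-α - 1)))
        = α * hh α l := by
      rw [hh, ← MeasureTheory.integral_const_mul]
      apply setIntegral_congr_fun measurableSet_Ioo
      intro x hx
      have h := rpow_succ_self (α := α) hx.1
      calc (Real.exp (-l * x) * x) * (α * x ^ (-α - 1))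
          = α * ((x ^ (-α - 1) * x) * Real.exp (-l * x)) := by ring
        _ = α * (x ^ (-α) * Real.exp (-l * x)) := by rw [h]
    rw [heq] at hd
    exact hd
  · refine (ae_restrict_iff' measurableSet_Ioo).2 (Eventually.of_forall fun x hx => ?_)
    intro lam hlam
    have hx0 : (0:ℝ) < x := hx.1
    have hlam0 : 0 < lam := by
      rw [Metric.mem_ball, Real.dist_eq, abs_lt] at hlam
      linarith
    have he1 : Real.exp (-lam * x) ≤ 1 := by
      rw [← Real.exp_zero]; apply Real.exp_le_exp.2; nlinarith
    have hnn : 0 ≤ (Real.exp (-lam * x) * x) * (α * x ^ (-α - 1)) := by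
      have := Real.rpow_nonneg hx0.le (-α - 1)
      have := (Real.exp_pos (-lam * x)).le
      positivity
    rw [Real.norm_eq_abs, abs_of_nonneg hnn]
    calc (Real.exp (-lam * x) * x) * (α * x ^ (-α - 1))
        ≤ (1 * x) * (α * x ^ (-α - 1)) := by
          apply mul_le_mul_of_nonneg_right
            (mul_le_mul_of_nonneg_right he1 hx0.le)
            (mul_nonneg hα.le (Real.rpow_nonneg hx0.le _))
      _ = α * (x ^ (-α - 1) * x) := by ring
      _ = α * x ^ (-α) := by rw [rpow_succ_self hx0]
  · refine (ae_restrict_iff' measurableSet_Ioo).2 (Eventually.of_forall fun x hx => ?_)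
    intro lam hlam
    have d1 : HasDerivAt (fun lam : ℝ => -lam * x) (-x) lam := by
      simpa using (hasDerivAt_id lam).neg.mul_const x
    have d2 := d1.exp
    have d3 := (d2.const_sub 1).mul_const (α * x ^ (-α - 1))
    exact d3.congr_deriv (by ring)

lemma psi_tendsto_atTop {α : ℝ} (hα : 0 < α) (hα1 : α < 1) :
    Tendsto (psi α) atTop atTop := by
  have hexp : (0:ℝ) < 1 - Real.exp (-1) := by
    have : Real.exp (-1) < 1 := by
      rw [← Real.exp_zero]; exact Real.exp_lt_exp.2 (by norm_num)
    linarith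
  have key : ∀ l : ℝ, 1 ≤ l → (1 - Real.exp (-1)) * (l ^ α - 1) ≤ psi α l := by
    intro l hl
    have hl0 : (0:ℝ) < l := by linarith
    have hc0 : (0:ℝ) < 1/l := by positivity
    have hc1 : 1/l ≤ 1 := by
      rw [div_le_one hl0]; exact hl
    have hsub : Ioo (1/l) 1 ⊆ Ioo (0:ℝ) 1 := Ioo_subset_Ioo hc0.le le_rfl
    have hint : IntervalIntegrable (fun x : ℝ => x ^ (-α - 1)) volume (1/l) 1 :=
      intervalIntegral.intervalIntegrable_rpow (Or.inr (by
        rw [uIcc_of_le hc1]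
        intro h
        exact absurd h.1 (not_le.2 hc0)))
    have hintOn : IntegrableOn (fun x : ℝ => x ^ (-α - 1)) (Ioo (1/l) 1) := by
      rwa [intervalIntegrable_iff_integrableOn_Ioo_of_le hc1] at hint
    have step1 : ∫ x in Ioo (1/l) 1, (1 - Real.exp (-1)) * (α * x ^ (-α - 1))
        ≤ ∫ x in Ioo (1/l) 1, (1 - Real.exp (-l * x)) * (α * x ^ (-α - 1)) := by
      apply setIntegral_mono_on
        (((hintOn.const_mul α).const_mul (1 - Real.exp (-1))))
        ((int_psi hα hα1 hl0.le).mono_set hsub) measurableSet_Ioo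
      intro x hx
      have hx0 : (0:ℝ) < x := lt_trans hc0 hx.1
      have hxl : 1 ≤ l * x := by
        rw [← div_le_iff₀' hl0]
        exact (le_of_lt hx.1).trans' (by rw [one_div])
      have : Real.exp (-l * x) ≤ Real.exp (-1) := by
        apply Real.exp_le_exp.2; nlinarith
      apply mul_le_mul_of_nonneg_right (by linarith)
        (mul_nonneg hα.le (Real.rpow_nonneg hx0.le _))
    have step2 : ∫ x in Ioo (1/l) 1, (1 - Real.exp (-l * x)) * (α * x ^ (-α - 1))
        ≤ psi α l := by
      apply setIntegral_mono_set (int_psi hα hα1 hl0.le)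
      · refine (ae_restrict_iff' measurableSet_Ioo).2 (Eventually.of_forall fun x hx => ?_)
        have he1 : Real.exp (-l * x) ≤ 1 := by
          rw [← Real.exp_zero]; apply Real.exp_le_exp.2; nlinarith [hx.1]
        exact mul_nonneg (by linarith) (mul_nonneg hα.le (Real.rpow_nonneg hx.1.le _))
      · exact Eventually.of_forall hsub
    have step3 : ∫ x in Ioo (1/l) 1, (1 - Real.exp (-1)) * (α * x ^ (-α - 1))
        = (1 - Real.exp (-1)) * (l ^ α - 1) := by
      rw [← integral_Ioc_eq_integral_Ioo, ← intervalIntegral.integral_of_le hc1]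
      rw [intervalIntegral.integral_const_mul, intervalIntegral.integral_const_mul]
      rw [integral_rpow (Or.inr ⟨by intro h; apply hα.ne'; linarith, by
        rw [uIcc_of_le hc1]
        intro h
        exact absurd h.1 (not_le.2 hc0)⟩)]
      have h1 : (-α - 1) + 1 = -α := by ring
      rw [h1, Real.one_rpow]
      have h2 : ((1:ℝ)/l) ^ (-α) = l ^ α := by
        rw [one_div, Real.inv_rpow hl0.le, Real.rpow_neg hl0.le, inv_inv]
      rw [h2, div_neg, mul_neg]
      have h3 : α * ((1 - l ^ α) / α) = 1 - l ^ α := by field_simp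
      rw [h3]
      ring
    linarith
  have htop : Tendsto (fun l : ℝ => (1 - Real.exp (-1)) * (l ^ α - 1)) atTop atTop := by
    apply Tendsto.const_mul_atTop hexp
    simp only [sub_eq_add_neg]
    exact tendsto_atTop_add_const_right atTop (-1) (tendsto_rpow_atTop hα)
  apply tendsto_atTop_mono' atTop ?_ htop
  filter_upwards [eventually_ge_atTop (1:ℝ)] with l hl
  exact key l hl

lemma key_facts {α : ℝ} (hα : 0 < α) (hα1 : α < 1) (r : ℕ) (hr : 0 < r) :
    (∫ l in Ioi (0:ℝ), (r:ℝ) * α * (hh α l * (1 + psi α l) ^ (-((r:ℝ) + 1)))) = 1 ∧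
    IntegrableOn (fun l => (r:ℝ) * α * (hh α l * (1 + psi α l) ^ (-((r:ℝ) + 1))))
      (Ioi (0:ℝ)) := by
  set G : ℝ → ℝ := fun l => -((1 + psi α l) ^ (-(r:ℝ))) with hG
  set Gd : ℝ → ℝ := fun l => (r:ℝ) * α * (hh α l * (1 + psi α l) ^ (-((r:ℝ) + 1))) with hGd
  have h1pos : ∀ l : ℝ, 0 ≤ l → 0 < 1 + psi α l := by
    intro l hl; linarith [psi_nonneg hα hl]
  have hasDerivG : ∀ l ∈ Ioi (0:ℝ), HasDerivAt G (Gd l) l := by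
    intro l hl
    have hd := psi_hasDeriv hα hα1 hl
    have hpos := h1pos l hl.le
    have h2 : HasDerivAt (fun t => 1 + psi α t) (α * hh α l) l := hd.const_add 1
    have h1 : HasDerivAt (fun y : ℝ => y ^ (-(r:ℝ)))
        (-(r:ℝ) * (1 + psi α l) ^ (-(r:ℝ) - 1)) (1 + psi α l) :=
      Real.hasDerivAt_rpow_const (Or.inl hpos.ne')
    have h3 := (h1.comp l h2).neg
    have h4 : Gd l = -((-(r:ℝ) * (1 + psi α l) ^ (-(r:ℝ) - 1)) * (α * hh α l)) := by
      rw [hGd]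
      have : -(r:ℝ) - 1 = -((r:ℝ) + 1) := by ring
      rw [← this]
      ring
    rw [h4]
    exact h3
  have Gnonneg : ∀ l ∈ Ioi (0:ℝ), 0 ≤ Gd l := by
    intro l hl
    have h1 := hh_nonneg (α := α) l
    have h2 := Real.rpow_nonneg (h1pos l (le_of_lt hl)).le (-((r:ℝ) + 1))
    exact mul_nonneg (mul_nonneg (Nat.cast_nonneg r) hα.le) (mul_nonneg h1 h2)
  have Gtendsto : Tendsto G atTop (nhds 0) := by
    have h := (tendsto_rpow_neg_atTop (show (0:ℝ) < r by exact_mod_cast hr)).comp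
      (tendsto_atTop_add_const_left atTop 1 (psi_tendsto_atTop hα hα1))
    have h2 := h.neg
    rw [neg_zero] at h2
    exact h2
  have Gcont0 : ContinuousWithinAt G (Ici 0) 0 := by
    have hψ := psi_cont0 hα hα1
    have h1 : ContinuousWithinAt (fun l => 1 + psi α l) (Ici (0:ℝ)) 0 :=
      continuousWithinAt_const.add hψ
    have h2 : ContinuousAt (fun y : ℝ => y ^ (-(r:ℝ))) (1 + psi α 0) := by
      apply Real.continuousAt_rpow_const
      left
      rw [psi_zero]; norm_num
    exact ContinuousWithinAt.neg
      (ContinuousAt.comp_continuousWithinAt (g := fun y : ℝ => y ^ (-(r:ℝ)))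
        (f := fun l => 1 + psi α l) h2 h1)
  have G0 : G 0 = -1 := by
    rw [hG]
    simp [psi_zero]
  refine ⟨?_, integrableOn_Ioi_deriv_of_nonneg Gcont0 hasDerivG Gnonneg Gtendsto⟩
  have := integral_Ioi_of_hasDerivAt_of_nonneg Gcont0 hasDerivG Gnonneg Gtendsto
  rw [G0] at this
  rw [this]
  norm_num

theorem lintegral_image_1d {s : Set ℝ} {f f' : ℝ → ℝ} (hs : MeasurableSet s)
    (hf' : ∀ x ∈ s, HasDerivWithinAt f (f' x) s x) (hf : InjOn f s) (g : ℝ → ℝ≥0∞) :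
    ∫⁻ x in f '' s, g x = ∫⁻ x in s, ENNReal.ofReal |f' x| * g (f x) := by
  simpa only [ContinuousLinearMap.det_toSpanSingleton] using
    lintegral_image_eq_lintegral_abs_det_fderiv_mul volume hs
      (fun x hx => (hf' x hx).hasFDerivWithinAt) hf g

lemma exp_lint {c : ℝ} (hc : 0 < c) :
    ∫⁻ l in Ioi (0:ℝ), ENNReal.ofReal (Real.exp (-(c * l))) = ENNReal.ofReal c⁻¹ := by
  have hint : IntegrableOn (fun l : ℝ => Real.exp (-(c * l))) (Ioi (0:ℝ)) := by
    have := exp_neg_integrableOn_Ioi 0 hc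
    simpa [neg_mul] using this
  have hreal : ∫ l in Ioi (0:ℝ), Real.exp (-(c * l)) = c⁻¹ := by
    have hderiv : ∀ l ∈ Ici (0:ℝ),
        HasDerivAt (fun t : ℝ => -(c⁻¹ * Real.exp (-(c * t)))) (Real.exp (-(c * l))) l := by
      intro l _
      have d1 : HasDerivAt (fun t : ℝ => -(c * t)) (-c) l := by
        have := ((hasDerivAt_id l).const_mul c).neg
        rw [mul_one] at this
        exact this
      have d2 := (d1.exp.const_mul c⁻¹).neg
      exact d2.congr_deriv (by
        rw [mul_neg, mul_neg, neg_neg, mul_left_comm, inv_mul_cancel₀ hc.ne', mul_one])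
    have htend : Tendsto (fun t : ℝ => -(c⁻¹ * Real.exp (-(c * t)))) atTop (nhds 0) := by
      have h0 : Tendsto (fun t : ℝ => c * t) atTop atTop :=
        Tendsto.const_mul_atTop hc tendsto_id
      have h1 : Tendsto (fun t : ℝ => -(c * t)) atTop atBot :=
        tendsto_neg_atBot_iff.2 h0
      have h2 := ((Real.tendsto_exp_atBot.comp h1).const_mul c⁻¹).neg
      simpa using h2
    have hkey := integral_Ioi_of_hasDerivAt_of_tendsto' hderiv hint htend
    rw [hkey]
    norm_num
  rw [← hreal, ofReal_integral_eq_lintegral_ofReal hint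
    (Eventually.of_forall fun l => (Real.exp_pos _).le)]

lemma subst1 {α : ℝ} (g : ℝ → ℝ) {v : ℝ} (hv0 : 0 < v) (hv1 : v < 1) :
    ∫⁻ t in Ioo (0:ℝ) (1/v), ENNReal.ofReal (t ^ (-α) * g (t * (1 - v)))
      = ∫⁻ x in Ioo (0:ℝ) 1,
          ENNReal.ofReal (v ^ (α - 1) * (x ^ (-α) * g (x * (1 - v) / v))) := by
  have himg : (fun x : ℝ => x / v) '' Ioo 0 1 = Ioo (0:ℝ) (1/v) := by
    ext t
    simp only [mem_image, mem_Ioo]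
    constructor
    · rintro ⟨x, ⟨h0, h1⟩, rfl⟩
      constructor
      · exact div_pos h0 hv0
      · gcongr
    · rintro ⟨h0, h1⟩
      refine ⟨t * v, ⟨mul_pos h0 hv0, by rwa [← lt_div_iff₀ hv0]⟩, ?_⟩
      field_simp
  have hderiv : ∀ x ∈ Ioo (0:ℝ) 1,
      HasDerivWithinAt (fun x : ℝ => x / v) (1 / v) (Ioo (0:ℝ) 1) x := by
    intro x _
    simpa using ((hasDerivAt_id x).div_const v).hasDerivWithinAt
  have hinj : InjOn (fun x : ℝ => x / v) (Ioo (0:ℝ) 1) := by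
    intro a _ b _ h
    simpa [div_eq_mul_inv, hv0.ne'] using h
  rw [← himg, lintegral_image_1d measurableSet_Ioo hderiv hinj]
  apply setLIntegral_congr_fun measurableSet_Ioo
  intro x hx
  dsimp only
  have hx0 : (0:ℝ) < x := hx.1
  have habs : |1 / v| = v⁻¹ := by
    rw [abs_of_pos (by positivity), one_div]
  rw [habs, ← ENNReal.ofReal_mul (by positivity)]
  congr 1
  have hva : (x / v) ^ (-α) = x ^ (-α) * v ^ α := by
    rw [div_eq_mul_inv, Real.mul_rpow hx0.le (inv_nonneg.2 hv0.le),
      Real.inv_rpow hv0.le, Real.rpow_neg hv0.le, inv_inv]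
  have hvp : v ^ (α - 1) = v ^ α * v⁻¹ := by
    rw [Real.rpow_sub hv0, Real.rpow_one, div_eq_mul_inv]
  have harg : x / v * (1 - v) = x * (1 - v) / v := by ring
  rw [hva, hvp, harg]
  ring

lemma subst3 (g : ℝ → ℝ) {x : ℝ} (hx : 0 < x) :
    ∫⁻ s in Ioi (0:ℝ), ENNReal.ofReal (g s * (x + s)⁻¹)
      = ∫⁻ v in Ioo (0:ℝ) 1, ENNReal.ofReal (v⁻¹ * g (x * (1 - v) / v)) := by
  set f : ℝ → ℝ := fun v => x * (1 - v) / v with hf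
  have himg : f '' Ioo 0 1 = Ioi (0:ℝ) := by
    ext s
    simp only [mem_image, mem_Ioo, mem_Ioi, hf]
    constructor
    · rintro ⟨v, ⟨hv0, hv1⟩, rfl⟩
      exact div_pos (mul_pos hx (by linarith)) hv0
    · intro hs
      refine ⟨x / (x + s), ⟨div_pos hx (by linarith),
        (div_lt_one (by linarith)).2 (by linarith)⟩, ?_⟩
      field_simp
      ring
  have hderiv : ∀ v ∈ Ioo (0:ℝ) 1,
      HasDerivWithinAt f (-(x / v^2)) (Ioo (0:ℝ) 1) v := by
    intro v hv
    have hv0 : (0:ℝ) < v := hv.1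
    have d1 : HasDerivAt (fun y : ℝ => x * y⁻¹ - x) (x * -(v^2)⁻¹) v :=
      ((hasDerivAt_inv hv0.ne').const_mul x).sub_const x
    have hev : f =ᶠ[nhds v] (fun y : ℝ => x * y⁻¹ - x) := by
      filter_upwards [IsOpen.mem_nhds isOpen_compl_singleton
        (by simpa using hv0.ne' : v ∈ ({0}ᶜ : Set ℝ))] with y hy
      have hy0 : (y:ℝ) ≠ 0 := by simpa using hy
      simp only [hf]
      field_simp
    have d2 : HasDerivAt f (x * -(v^2)⁻¹) v := d1.congr_of_eventuallyEq hev
    have : x * -(v^2)⁻¹ = -(x / v^2) := by field_simp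
    rw [this] at d2
    exact d2.hasDerivWithinAt
  have hinj : InjOn f (Ioo (0:ℝ) 1) := by
    intro a ha b hb h
    have ha0 : (0:ℝ) < a := ha.1
    have hb0 : (0:ℝ) < b := hb.1
    simp only [hf] at h
    field_simp at h
    nlinarith [h]
  rw [← himg, lintegral_image_1d measurableSet_Ioo hderiv hinj]
  apply setLIntegral_congr_fun measurableSet_Ioo
  intro v hv
  dsimp only
  have hv0 : (0:ℝ) < v := hv.1
  have hv1 : v < 1 := hv.2
  have habs : |(-(x / v^2))| = x / v^2 := by
    rw [abs_neg, abs_of_pos (by positivity)]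
  have hxf : x + f v = x / v := by
    simp only [hf]
    field_simp
    ring
  rw [habs, hxf, ← ENNReal.ofReal_mul (by positivity)]
  congr 1
  have hfv : f v = x * (1 - v) / v := rfl
  rw [hfv]
  field_simp

end Stmt15

/-- Normalisation of the size-biased joint density (n=1):
rα ∫_0^1 v^{-α} ∫_0^{1/v} t^{-α} g(t(1-v)) dt dv = 1. -/
theorem stmt_15 (α : ℝ) (hα : 0 < α) (hα1 : α < 1) (r : ℕ) (hr : 0 < r)
    (g : ℝ → ℝ) (hgpos : ∀ t ∈ Ioi (0:ℝ), 0 ≤ g t) (hgmeas : Measurable g)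
    (hgprob : ∫ t in Ioi (0:ℝ), g t = 1)
    (hLap : ∀ l > (0:ℝ),
      ∫ t in Ioi (0:ℝ), Real.exp (-l * t) * g t
        = (1 + ∫ x in Ioo (0:ℝ) 1, (1 - Real.exp (-l * x)) * (α * x ^ (-α - 1)))
            ^ (-(r + 1 : ℝ))) :
    r * α * ∫ v in Ioo (0:ℝ) 1, v ^ (-α) *
        ∫ t in Ioo (0:ℝ) (1 / v), t ^ (-α) * g (t * (1 - v)) = 1 := by
  classical
  have hgint : IntegrableOn g (Ioi (0:ℝ)) := by
    by_contra h
    rw [MeasureTheory.integral_undef h] at hgprob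
    exact one_ne_zero hgprob.symm
  -- measurable version of the inner lintegral
  set W : ℝ × ℝ → ENNReal := fun q =>
    Set.indicator {q : ℝ × ℝ | 0 < q.2 ∧ q.2 * q.1 < 1}
      (fun q => ENNReal.ofReal (q.2 ^ (-α) * g (q.2 * (1 - q.1)))) q with hW
  have hWmeas : Measurable W := by
    apply Measurable.indicator (by fun_prop)
    exact (measurableSet_lt measurable_const measurable_snd).inter
      (measurableSet_lt (measurable_snd.mul measurable_fst) measurable_const)
  set M : ℝ → ENNReal := fun v => ∫⁻ t, W (v, t) with hM
  have hMmeas : Measurable M := hWmeas.lintegral_prod_right'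
  have hMI : ∀ v ∈ Ioo (0:ℝ) 1,
      M v = ∫⁻ t in Ioo (0:ℝ) (1/v), ENNReal.ofReal (t ^ (-α) * g (t * (1 - v))) := by
    intro v hv
    have hv0 := hv.1
    rw [hM]
    rw [← lintegral_indicator measurableSet_Ioo]
    apply lintegral_congr
    intro t
    have hiff : ((v, t) ∈ {q : ℝ × ℝ | 0 < q.2 ∧ q.2 * q.1 < 1}) ↔ t ∈ Ioo (0:ℝ) (1/v) := by
      simp only [mem_setOf_eq, mem_Ioo]
      exact and_congr_right fun _ => (lt_div_iff₀ hv0).symm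
    simp only [hW, Set.indicator_apply, hiff]
  set A : ENNReal := ∫⁻ v in Ioo (0:ℝ) 1, ENNReal.ofReal (v ^ (-α)) * M v with hA
  -- the chain of transformations
  have chain : A = ∫⁻ l in Ioi (0:ℝ),
      ENNReal.ofReal (Stmt15.hh α l * (1 + Stmt15.psi α l) ^ (-((r:ℝ) + 1))) := by
    calc A
        = ∫⁻ v in Ioo (0:ℝ) 1, ∫⁻ x in Ioo (0:ℝ) 1,
            ENNReal.ofReal (v⁻¹ * (x ^ (-α) * g (x * (1 - v) / v))) := by
          rw [hA]
          apply setLIntegral_congr_fun measurableSet_Ioo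
          intro v hv
          dsimp only
          rw [hMI v hv, Stmt15.subst1 g hv.1 hv.2,
            ← lintegral_const_mul' _ _ ENNReal.ofReal_ne_top]
          apply lintegral_congr
          intro x
          rw [← ENNReal.ofReal_mul (Real.rpow_nonneg hv.1.le _)]
          congr 1
          have hvv : v ^ (-α) * v ^ (α - 1) = v⁻¹ := by
            rw [← Real.rpow_add hv.1, show -α + (α - 1) = (-1:ℝ) by ring,
              Real.rpow_neg_one]
          calc v ^ (-α) * (v ^ (α - 1) * (x ^ (-α) * g (x * (1 - v) / v)))
              = (v ^ (-α) * v ^ (α - 1)) * (x ^ (-α) * g (x * (1 - v) / v)) := by ring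
            _ = v⁻¹ * (x ^ (-α) * g (x * (1 - v) / v)) := by rw [hvv]
      _ = ∫⁻ x in Ioo (0:ℝ) 1, ∫⁻ v in Ioo (0:ℝ) 1,
            ENNReal.ofReal (v⁻¹ * (x ^ (-α) * g (x * (1 - v) / v))) := by
          exact lintegral_lintegral_swap
            ((by fun_prop : Measurable fun p : ℝ × ℝ =>
              ENNReal.ofReal (p.1⁻¹ * (p.2 ^ (-α) * g (p.2 * (1 - p.1) / p.1)))).aemeasurable)
      _ = ∫⁻ x in Ioo (0:ℝ) 1, ENNReal.ofReal (x ^ (-α)) *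
            ∫⁻ s in Ioi (0:ℝ), ENNReal.ofReal (g s * (x + s)⁻¹) := by
          apply setLIntegral_congr_fun measurableSet_Ioo
          intro x hx
          dsimp only
          rw [Stmt15.subst3 g hx.1, ← lintegral_const_mul' _ _ ENNReal.ofReal_ne_top]
          apply lintegral_congr
          intro v
          rw [← ENNReal.ofReal_mul (Real.rpow_nonneg hx.1.le _)]
          congr 1
          ring
      _ = ∫⁻ x in Ioo (0:ℝ) 1, ∫⁻ l in Ioi (0:ℝ), ENNReal.ofReal (x ^ (-α)) *
            ∫⁻ s in Ioi (0:ℝ), ENNReal.ofReal (g s)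
              * ENNReal.ofReal (Real.exp (-((x + s) * l))) := by
          apply setLIntegral_congr_fun measurableSet_Ioo
          intro x hx
          dsimp only
          have inner1 : (∫⁻ s in Ioi (0:ℝ), ENNReal.ofReal (g s * (x + s)⁻¹))
              = ∫⁻ s in Ioi (0:ℝ), ∫⁻ l in Ioi (0:ℝ), ENNReal.ofReal (g s)
                  * ENNReal.ofReal (Real.exp (-((x + s) * l))) := by
            apply setLIntegral_congr_fun measurableSet_Ioi
            intro s hs
            dsimp only
            rw [ENNReal.ofReal_mul (hgpos s hs),
              ← Stmt15.exp_lint (show (0:ℝ) < x + s by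
                have := mem_Ioi.1 hs; linarith [hx.1]),
              ← lintegral_const_mul' _ _ ENNReal.ofReal_ne_top]
          have inner2 : (∫⁻ s in Ioi (0:ℝ), ∫⁻ l in Ioi (0:ℝ), ENNReal.ofReal (g s)
                  * ENNReal.ofReal (Real.exp (-((x + s) * l))))
              = ∫⁻ l in Ioi (0:ℝ), ∫⁻ s in Ioi (0:ℝ), ENNReal.ofReal (g s)
                  * ENNReal.ofReal (Real.exp (-((x + s) * l))) := by
            exact lintegral_lintegral_swap
              ((by fun_prop : Measurable fun p : ℝ × ℝ =>
                ENNReal.ofReal (g p.1)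
                  * ENNReal.ofReal (Real.exp (-((x + p.1) * p.2)))).aemeasurable)
          rw [inner1, inner2, ← lintegral_const_mul' _ _ ENNReal.ofReal_ne_top]
      _ = ∫⁻ l in Ioi (0:ℝ), ∫⁻ x in Ioo (0:ℝ) 1, ENNReal.ofReal (x ^ (-α)) *
            ∫⁻ s in Ioi (0:ℝ), ENNReal.ofReal (g s)
              * ENNReal.ofReal (Real.exp (-((x + s) * l))) := by
          apply lintegral_lintegral_swap
          apply AEMeasurable.mul
          · exact (by fun_prop : Measurable fun p : ℝ × ℝ =>
              ENNReal.ofReal (p.1 ^ (-α))).aemeasurable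
          · apply Measurable.aemeasurable
            exact Measurable.lintegral_prod_right'
              (f := fun q : (ℝ × ℝ) × ℝ => ENNReal.ofReal (g q.2)
                * ENNReal.ofReal (Real.exp (-((q.1.1 + q.2) * q.1.2))))
              (by fun_prop)
      _ = ∫⁻ l in Ioi (0:ℝ),
            ENNReal.ofReal (Stmt15.hh α l * (1 + Stmt15.psi α l) ^ (-((r:ℝ) + 1))) := by
          apply setLIntegral_congr_fun measurableSet_Ioi
          intro l hl
          dsimp only
          have hl0 : (0:ℝ) < l := mem_Ioi.1 hl
          have hphi : (0:ℝ) ≤ (1 + Stmt15.psi α l) ^ (-((r:ℝ) + 1)) :=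
            Real.rpow_nonneg (by linarith [Stmt15.psi_nonneg hα hl0.le]) _
          have hsint : (∫⁻ s in Ioi (0:ℝ), ENNReal.ofReal (Real.exp (-l * s) * g s))
              = ENNReal.ofReal ((1 + Stmt15.psi α l) ^ (-((r:ℝ) + 1))) := by
            have hint : IntegrableOn (fun s => Real.exp (-l * s) * g s) (Ioi (0:ℝ)) := by
              apply Integrable.mono' hgint (Measurable.aestronglyMeasurable (by fun_prop))
              refine (ae_restrict_iff' measurableSet_Ioi).2
                (Filter.Eventually.of_forall fun s hs => ?_)
              have hs0 := mem_Ioi.1 hs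
              have h1 : Real.exp (-l * s) ≤ 1 := by
                rw [← Real.exp_zero]
                exact Real.exp_le_exp.2 (by nlinarith)
              have h0 := hgpos s hs
              rw [Real.norm_eq_abs, abs_of_nonneg (mul_nonneg (Real.exp_pos _).le h0)]
              nlinarith
            rw [← ofReal_integral_eq_lintegral_ofReal hint
              ((ae_restrict_iff' measurableSet_Ioi).2 (Filter.Eventually.of_forall
                fun s hs => mul_nonneg (Real.exp_pos _).le (hgpos s hs))),
              hLap l hl0]
            rfl
          have hxint : ∀ x ∈ Ioo (0:ℝ) 1,
              (∫⁻ s in Ioi (0:ℝ), ENNReal.ofReal (g s)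
                * ENNReal.ofReal (Real.exp (-((x + s) * l))))
              = ENNReal.ofReal (Real.exp (-l * x))
                * ENNReal.ofReal ((1 + Stmt15.psi α l) ^ (-((r:ℝ) + 1))) := by
            intro x hx
            have h1 : ∀ s ∈ Ioi (0:ℝ), ENNReal.ofReal (g s)
                * ENNReal.ofReal (Real.exp (-((x + s) * l)))
                = ENNReal.ofReal (Real.exp (-l * x))
                  * ENNReal.ofReal (Real.exp (-l * s) * g s) := by
              intro s _
              rw [show -((x + s) * l) = -l * x + -l * s by ring, Real.exp_add,
                ENNReal.ofReal_mul (Real.exp_pos _).le,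
                ENNReal.ofReal_mul (Real.exp_pos _).le]
              ring
            rw [setLIntegral_congr_fun measurableSet_Ioi h1,
              lintegral_const_mul' _ _ ENNReal.ofReal_ne_top, hsint]
          calc (∫⁻ x in Ioo (0:ℝ) 1, ENNReal.ofReal (x ^ (-α)) *
                ∫⁻ s in Ioi (0:ℝ), ENNReal.ofReal (g s)
                  * ENNReal.ofReal (Real.exp (-((x + s) * l))))
              = ∫⁻ x in Ioo (0:ℝ) 1,
                  ENNReal.ofReal ((1 + Stmt15.psi α l) ^ (-((r:ℝ) + 1)))
                    * ENNReal.ofReal (x ^ (-α) * Real.exp (-l * x)) := by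
                apply setLIntegral_congr_fun measurableSet_Ioo
                intro x hx
                dsimp only
                rw [hxint x hx, ← mul_assoc,
                  ← ENNReal.ofReal_mul (Real.rpow_nonneg hx.1.le _), mul_comm]
            _ = ENNReal.ofReal ((1 + Stmt15.psi α l) ^ (-((r:ℝ) + 1)))
                  * ∫⁻ x in Ioo (0:ℝ) 1, ENNReal.ofReal (x ^ (-α) * Real.exp (-l * x)) :=
                lintegral_const_mul' _ _ ENNReal.ofReal_ne_top
            _ = ENNReal.ofReal ((1 + Stmt15.psi α l) ^ (-((r:ℝ) + 1)))
                  * ENNReal.ofReal (Stmt15.hh α l) := by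
                rw [← ofReal_integral_eq_lintegral_ofReal (Stmt15.int_hh hα1 l)
                  ((ae_restrict_iff' measurableSet_Ioo).2 (Filter.Eventually.of_forall
                    fun x hx => mul_nonneg (Real.rpow_nonneg hx.1.le _) (Real.exp_pos _).le))]
                rfl
            _ = ENNReal.ofReal (Stmt15.hh α l * (1 + Stmt15.psi α l) ^ (-((r:ℝ) + 1))) := by
                rw [← ENNReal.ofReal_mul hphi, mul_comm]
  -- evaluate via the key integral
  have hA1 : ENNReal.ofReal ((r:ℝ) * α) * A = 1 := by
    obtain ⟨hkey, hkeyint⟩ := Stmt15.key_facts hα hα1 r hr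
    rw [chain, ← lintegral_const_mul' _ _ ENNReal.ofReal_ne_top]
    have hcong : ∀ l ∈ Ioi (0:ℝ), ENNReal.ofReal ((r:ℝ) * α)
        * ENNReal.ofReal (Stmt15.hh α l * (1 + Stmt15.psi α l) ^ (-((r:ℝ) + 1)))
        = ENNReal.ofReal ((r:ℝ) * α
            * (Stmt15.hh α l * (1 + Stmt15.psi α l) ^ (-((r:ℝ) + 1)))) := by
      intro l _
      rw [ENNReal.ofReal_mul (mul_nonneg (Nat.cast_nonneg r) hα.le)]
    rw [setLIntegral_congr_fun measurableSet_Ioi hcong,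
      ← ofReal_integral_eq_lintegral_ofReal hkeyint
        ((ae_restrict_iff' measurableSet_Ioi).2 (Filter.Eventually.of_forall fun l hl => by
          have hl0 : (0:ℝ) < l := mem_Ioi.1 hl
          exact mul_nonneg (mul_nonneg (Nat.cast_nonneg r) hα.le)
            (mul_nonneg (Stmt15.hh_nonneg l)
              (Real.rpow_nonneg (by linarith [Stmt15.psi_nonneg hα hl0.le]) _)))),
      hkey, ENNReal.ofReal_one]
  have hrα : (0:ℝ) < (r:ℝ) * α := by
    have : (0:ℝ) < (r:ℝ) := by exact_mod_cast hr
    positivity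
  have hAne : A ≠ ⊤ := by
    intro h
    rw [h, ENNReal.mul_top (by simpa using (ENNReal.ofReal_pos.2 hrα).ne')] at hA1
    exact (ENNReal.top_ne_one) hA1
  have hfin : ∀ᵐ v ∂(volume.restrict (Ioo (0:ℝ) 1)),
      ENNReal.ofReal (v ^ (-α)) * M v ≠ ⊤ := by
    have h := ae_lt_top
      ((by fun_prop : Measurable fun v : ℝ => ENNReal.ofReal (v ^ (-α))).mul hMmeas)
      (by rw [hA] at hAne; exact hAne)
    filter_upwards [h] with v hv
    exact hv.ne
  -- convert the Bochner integral to A.toReal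
  have hB1 : (∫ v in Ioo (0:ℝ) 1, v ^ (-α) *
        ∫ t in Ioo (0:ℝ) (1 / v), t ^ (-α) * g (t * (1 - v)))
      = ∫ v in Ioo (0:ℝ) 1, (ENNReal.ofReal (v ^ (-α)) * M v).toReal := by
    apply setIntegral_congr_fun measurableSet_Ioo
    intro v hv
    have hv0 := hv.1
    show v ^ (-α) * (∫ t in Ioo (0:ℝ) (1 / v), t ^ (-α) * g (t * (1 - v)))
      = (ENNReal.ofReal (v ^ (-α)) * M v).toReal
    have hInner : (∫ t in Ioo (0:ℝ) (1 / v), t ^ (-α) * g (t * (1 - v)))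
        = (∫⁻ t in Ioo (0:ℝ) (1/v),
            ENNReal.ofReal (t ^ (-α) * g (t * (1 - v)))).toReal := by
      rw [integral_eq_lintegral_of_nonneg_ae]
      · refine (ae_restrict_iff' measurableSet_Ioo).2
          (Filter.Eventually.of_forall fun t ht => ?_)
        exact mul_nonneg (Real.rpow_nonneg ht.1.le _)
          (hgpos _ (mul_pos ht.1 (by linarith [hv.2])))
      · exact Measurable.aestronglyMeasurable (by fun_prop)
    rw [hInner, ← hMI v hv, ENNReal.toReal_mul,
      ENNReal.toReal_ofReal (Real.rpow_nonneg hv0.le _)]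
  have hB2 : (∫ v in Ioo (0:ℝ) 1, (ENNReal.ofReal (v ^ (-α)) * M v).toReal)
      = A.toReal := by
    have hmb : Measurable fun v : ℝ => (ENNReal.ofReal (v ^ (-α)) * M v).toReal :=
      ((by fun_prop : Measurable fun v : ℝ => ENNReal.ofReal (v ^ (-α))).mul
        hMmeas).ennreal_toReal
    rw [integral_eq_lintegral_of_nonneg_ae
      (Filter.Eventually.of_forall fun v => ENNReal.toReal_nonneg)
      hmb.aestronglyMeasurable, hA]
    congr 1
    apply lintegral_congr_ae
    filter_upwards [hfin] with v hv
    exact ENNReal.ofReal_toReal hv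
  rw [hB1, hB2]
  have hfinal : ((ENNReal.ofReal ((r:ℝ) * α)) * A).toReal = (1:ENNReal).toReal := by
    rw [hA1]
  rw [ENNReal.toReal_mul, ENNReal.toReal_ofReal hrα.le, ENNReal.toReal_one] at hfinal
  exact hfinal
end
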